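/- For every nonempty bounded set K ⊂ ℝ^D, the Hausdorff distance between K and its closed convex hull satisfies d_H(K, conv(K)) ≤ sqrt(D/(2(D+1))) · diam(K). -/

import Mathlib

open Metric Set Finset
open scoped RealInnerProductSpace

noncomputable section

abbrev Euc (D : ℕ) := EuclideanSpace ℝ (Fin D)

variable {D : ℕ}

lemma key_exists (K : Set (Euc D)) (hbd : Bornology.IsBounded K) {y : Euc D}
    (hy : y ∈ convexHull ℝ K) :
    ∃ x ∈ K, dist y x ≤ Real.sqrt (D / (2 * (D + 1))) * Metric.diam K := by
  classical
  set c : ℝ := (D : ℝ) / (2 * (D + 1)) with hc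
  have hc0 : 0 ≤ c := by positivity
  set d : ℝ := Metric.diam K with hd
  have hd0 : 0 ≤ d := Metric.diam_nonneg
  set r : ℝ := Real.sqrt c * d with hr
  have hr0 : 0 ≤ r := mul_nonneg (Real.sqrt_nonneg _) hd0
  have hr2 : r ^ 2 = c * d ^ 2 := by
    rw [hr, mul_pow, Real.sq_sqrt hc0]
  rw [convexHull_eq_union] at hy
  simp only [Set.mem_iUnion] at hy
  obtain ⟨t, hts, hai, hyt⟩ := hy
  rw [Finset.convexHull_eq] at hyt
  obtain ⟨w, hw0, hw1, hcc⟩ := hyt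
  have hccy : ∑ i ∈ t, w i • i = y := by
    rw [← hcc, Finset.centerMass_eq_of_sum_1 _ _ hw1]; rfl
  have htne : t.Nonempty := by
    by_contra h
    rw [Finset.not_nonempty_iff_eq_empty] at h
    simp [h] at hw1
  have hn1 : 1 ≤ t.card := Finset.card_pos.mpr htne
  -- card bound from affine independence
  have hcard : t.card ≤ D + 1 := by
    have := hai.card_le_finrank_succ
    rw [Fintype.card_coe] at this
    refine this.trans ?_
    have h2 : Module.finrank ℝ (vectorSpan ℝ (Set.range ((↑) : t → Euc D))) ≤
        Module.finrank ℝ (Euc D) := Submodule.finrank_le _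
    have h3 : Module.finrank ℝ (Euc D) = D := finrank_euclideanSpace_fin
    omega
  -- the variance identity
  have hz : ∑ i ∈ t, w i • (i - y) = 0 := by
    simp only [smul_sub, Finset.sum_sub_distrib, hccy, ← Finset.sum_smul, hw1, one_smul, sub_self]
  have hA : ∑ i ∈ t, ∑ j ∈ t, w i * w j * ‖i - y‖ ^ 2 = ∑ i ∈ t, w i * ‖i - y‖ ^ 2 := by
    refine Finset.sum_congr rfl fun i _ => ?_
    calc ∑ j ∈ t, w i * w j * ‖i - y‖ ^ 2 = (w i * ‖i - y‖ ^ 2) * ∑ j ∈ t, w j := by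
          rw [Finset.mul_sum]; exact Finset.sum_congr rfl fun j _ => by ring
      _ = w i * ‖i - y‖ ^ 2 := by rw [hw1, mul_one]
  have hB : ∑ i ∈ t, ∑ j ∈ t, w i * w j * ‖j - y‖ ^ 2 = ∑ i ∈ t, w i * ‖i - y‖ ^ 2 := by
    rw [Finset.sum_comm]
    refine Finset.sum_congr rfl fun j _ => ?_
    calc ∑ i ∈ t, w i * w j * ‖j - y‖ ^ 2 = (w j * ‖j - y‖ ^ 2) * ∑ i ∈ t, w i := by
          rw [Finset.mul_sum]; exact Finset.sum_congr rfl fun i _ => by ring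
      _ = w j * ‖j - y‖ ^ 2 := by rw [hw1, mul_one]
  have hC : ∑ i ∈ t, ∑ j ∈ t, w i * w j * ⟪i - y, j - y⟫ = 0 := by
    have : ⟪∑ i ∈ t, w i • (i - y), ∑ j ∈ t, w j • (j - y)⟫ =
        ∑ i ∈ t, ∑ j ∈ t, w i * w j * ⟪i - y, j - y⟫ := by
      rw [sum_inner]
      refine Finset.sum_congr rfl fun i _ => ?_
      rw [real_inner_smul_left, inner_sum, Finset.mul_sum]
      refine Finset.sum_congr rfl fun j _ => ?_
      rw [real_inner_smul_right]; ring
    rw [hz] at this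
    simpa using this.symm
  have key : ∑ i ∈ t, ∑ j ∈ t, w i * w j * ‖(i : Euc D) - j‖ ^ 2 =
      2 * ∑ i ∈ t, w i * ‖i - y‖ ^ 2 := by
    have step : ∀ i ∈ t, ∀ j ∈ t, w i * w j * ‖(i : Euc D) - j‖ ^ 2 =
        w i * w j * ‖i - y‖ ^ 2 + w i * w j * ‖j - y‖ ^ 2 -
          2 * (w i * w j * ⟪i - y, j - y⟫) := by
      intro i _ j _
      have hij : (i : Euc D) - j = (i - y) - (j - y) := by abel
      rw [hij, norm_sub_sq_real]; ring
    calc ∑ i ∈ t, ∑ j ∈ t, w i * w j * ‖(i : Euc D) - j‖ ^ 2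
        = ∑ i ∈ t, ∑ j ∈ t, (w i * w j * ‖i - y‖ ^ 2 + w i * w j * ‖j - y‖ ^ 2 -
            2 * (w i * w j * ⟪i - y, j - y⟫)) := by
          exact Finset.sum_congr rfl fun i hi => Finset.sum_congr rfl fun j hj => step i hi j hj
      _ = (∑ i ∈ t, ∑ j ∈ t, w i * w j * ‖i - y‖ ^ 2) +
            (∑ i ∈ t, ∑ j ∈ t, w i * w j * ‖j - y‖ ^ 2) -
            2 * ∑ i ∈ t, ∑ j ∈ t, w i * w j * ⟪i - y, j - y⟫ := by
          simp [Finset.sum_add_distrib, Finset.sum_sub_distrib, Finset.mul_sum]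
      _ = 2 * ∑ i ∈ t, w i * ‖i - y‖ ^ 2 := by rw [hA, hB, hC]; ring
  -- bound the double sum
  have hdist : ∀ i ∈ t, ∀ j ∈ t, ‖(i : Euc D) - j‖ ≤ d := by
    intro i hi j hj
    rw [← dist_eq_norm]
    exact Metric.dist_le_diam_of_mem hbd (hts hi) (hts hj)
  have per_i : ∀ i ∈ t, ∑ j ∈ t, w i * w j * ‖(i : Euc D) - j‖ ^ 2 ≤
      d ^ 2 * (w i * (1 - w i)) := by
    intro i hi
    rw [← Finset.add_sum_erase _ _ hi, sub_self, norm_zero]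
    have hrest : ∑ j ∈ t.erase i, w i * w j * ‖(i : Euc D) - j‖ ^ 2 ≤
        ∑ j ∈ t.erase i, w i * w j * d ^ 2 := by
      refine Finset.sum_le_sum fun j hj => ?_
      have hj' := Finset.mem_of_mem_erase hj
      have := hdist i hi j hj'
      have h1 : ‖(i : Euc D) - j‖ ^ 2 ≤ d ^ 2 := by
        have := pow_le_pow_left₀ (norm_nonneg _) this 2
        exact this
      exact mul_le_mul_of_nonneg_left h1 (mul_nonneg (hw0 i hi) (hw0 j hj'))
    have hsum_erase : ∑ j ∈ t.erase i, w j = 1 - w i := by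
      rw [Finset.sum_erase_eq_sub hi, hw1]
    have hval : ∑ j ∈ t.erase i, w i * w j * d ^ 2 = d ^ 2 * (w i * (1 - w i)) := by
      calc ∑ j ∈ t.erase i, w i * w j * d ^ 2 = (w i * d ^ 2) * ∑ j ∈ t.erase i, w j := by
            rw [Finset.mul_sum]; exact Finset.sum_congr rfl fun j _ => by ring
        _ = d ^ 2 * (w i * (1 - w i)) := by rw [hsum_erase]; ring
    nlinarith [hrest, hval]
  -- sum up the per-row bounds
  have hsum2 : ∑ i ∈ t, ∑ j ∈ t, w i * w j * ‖(i : Euc D) - j‖ ^ 2 ≤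
      d ^ 2 * (1 - ∑ i ∈ t, w i ^ 2) := by
    calc ∑ i ∈ t, ∑ j ∈ t, w i * w j * ‖(i : Euc D) - j‖ ^ 2
        ≤ ∑ i ∈ t, d ^ 2 * (w i * (1 - w i)) := Finset.sum_le_sum per_i
      _ = d ^ 2 * (1 - ∑ i ∈ t, w i ^ 2) := by
          rw [← Finset.mul_sum]
          congr 1
          have : ∀ i ∈ t, w i * (1 - w i) = w i - w i ^ 2 := fun i _ => by ring
          rw [Finset.sum_congr rfl this, Finset.sum_sub_distrib, hw1]
  have hCS : (1 : ℝ) ≤ t.card * ∑ i ∈ t, w i ^ 2 := by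
    have := sq_sum_le_card_mul_sum_sq (s := t) (f := w)
    rwa [hw1, one_pow] at this
  have hcardR : (t.card : ℝ) ≤ (D : ℝ) + 1 := by exact_mod_cast hcard
  have hcardR1 : (1 : ℝ) ≤ (t.card : ℝ) := by exact_mod_cast hn1
  have hD1 : (0 : ℝ) < (D : ℝ) + 1 := by positivity
  have hws : 1 / ((D : ℝ) + 1) ≤ ∑ i ∈ t, w i ^ 2 := by
    have hcpos : (0 : ℝ) < (t.card : ℝ) := by linarith
    have h1 : 1 / (t.card : ℝ) ≤ ∑ i ∈ t, w i ^ 2 := by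
      rw [div_le_iff₀ hcpos]
      nlinarith [hCS]
    have h2 : 1 / ((D : ℝ) + 1) ≤ 1 / (t.card : ℝ) :=
      one_div_le_one_div_of_le hcpos hcardR
    linarith
  have hfinal : ∑ i ∈ t, w i * ‖i - y‖ ^ 2 ≤ c * d ^ 2 := by
    have e1 : (1 : ℝ) - ∑ i ∈ t, w i ^ 2 ≤ (D : ℝ) / ((D : ℝ) + 1) := by
      have : (D : ℝ) / ((D : ℝ) + 1) = 1 - 1 / ((D : ℝ) + 1) := by
        field_simp; ring
      rw [this]; linarith
    have e2 : 2 * ∑ i ∈ t, w i * ‖i - y‖ ^ 2 ≤ d ^ 2 * ((D : ℝ) / ((D : ℝ) + 1)) := by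
      rw [← key]
      exact hsum2.trans (mul_le_mul_of_nonneg_left e1 (sq_nonneg d))
    have e3 : c * d ^ 2 = d ^ 2 * ((D : ℝ) / ((D : ℝ) + 1)) / 2 := by
      rw [hc]; field_simp
    linarith
  -- extract a close point of t
  by_contra hcon
  push_neg at hcon
  obtain ⟨i0, hi0, hwi0⟩ : ∃ i ∈ t, 0 < w i := by
    by_contra h'
    push_neg at h'
    have : ∑ i ∈ t, w i ≤ 0 := Finset.sum_nonpos h'
    rw [hw1] at this; linarith
  have hfar : ∀ i ∈ t, c * d ^ 2 < ‖(i : Euc D) - y‖ ^ 2 := by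
    intro i hi
    have hri : r < dist y i := hcon i (hts hi)
    have hni : r < ‖(i : Euc D) - y‖ := by
      rwa [dist_eq_norm, norm_sub_rev] at hri
    calc c * d ^ 2 = r ^ 2 := hr2.symm
      _ < ‖(i : Euc D) - y‖ ^ 2 := by
          have := mul_lt_mul'' hni hni hr0 hr0
          calc r ^ 2 = r * r := sq r
            _ < ‖(i : Euc D) - y‖ * ‖(i : Euc D) - y‖ := this
            _ = ‖(i : Euc D) - y‖ ^ 2 := (sq _).symm
  have hlt : ∑ i ∈ t, w i * (c * d ^ 2) < ∑ i ∈ t, w i * ‖i - y‖ ^ 2 := by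
    refine Finset.sum_lt_sum (fun i hi => ?_) ⟨i0, hi0, ?_⟩
    · exact mul_le_mul_of_nonneg_left (hfar i hi).le (hw0 i hi)
    · exact mul_lt_mul_of_pos_left (hfar i0 hi0) hwi0
  rw [← Finset.sum_mul, hw1, one_mul] at hlt
  linarith

theorem hausdorffDist_convexHull_le (K : Set (Euc D)) (hne : K.Nonempty)
    (hbd : Bornology.IsBounded K) :
    Metric.hausdorffDist K (closure (convexHull ℝ K)) ≤
      Real.sqrt (D / (2 * (D + 1))) * Metric.diam K := by
  rw [Metric.hausdorffDist_closure₂]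
  refine Metric.hausdorffDist_le_of_mem_dist
    (mul_nonneg (Real.sqrt_nonneg _) Metric.diam_nonneg) ?_ ?_
  · intro x hx
    refine ⟨x, subset_convexHull ℝ K hx, ?_⟩
    rw [dist_self]
    positivity
  · intro y hy
    exact key_exists K hbd hy

end
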